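/- arXiv:2409.01153 — 3 statements merged into one kernel-verified Lean document; each statement's English description precedes it below -/
import Mathlib

section
/- Let ξ be an n×n̄ complex matrix with blocks ξ₁ (the top n̄×n̄ block) and ξ₂ (the bottom (n−n̄)×n̄ block). If Re(trace(Π σ ξ)) = 0 for all anti-Hermitian σ ∈ u(n), where Π = [I_{n̄} 0], then ξ₂ = 0. -/
open Matrix

/-- If `Re(trace(Π σ ξ)) = 0` for all anti-Hermitian `σ`, where
`Π = [I_{n̄} 0]` and `ξ` has top block `ξ₁` and bottom block `ξ₂`,
then `ξ₂ = 0`. -/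
theorem critical_point_lower_block_zero (nbar k : ℕ)
    (ξ₁ : Matrix (Fin nbar) (Fin nbar) ℂ)
    (ξ₂ : Matrix (Fin k) (Fin nbar) ℂ)
    (ξ : Matrix (Fin nbar ⊕ Fin k) (Fin nbar) ℂ)
    (hξ : ξ = Matrix.fromRows ξ₁ ξ₂)
    (P : Matrix (Fin nbar) (Fin nbar ⊕ Fin k) ℂ)
    (hP : P = Matrix.fromCols 1 0)
    (hcrit : ∀ σ : Matrix (Fin nbar ⊕ Fin k) (Fin nbar ⊕ Fin k) ℂ,
      σᴴ = -σ → (Matrix.trace (P * σ * ξ)).re = 0) :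
    ξ₂ = 0 := by
  subst hξ hP
  -- key: for every B, Re(trace (B * ξ₂)) = 0
  have key : ∀ B : Matrix (Fin nbar) (Fin k) ℂ,
      (Matrix.trace (B * ξ₂)).re = 0 := by
    intro B
    have h := hcrit (Matrix.fromBlocks 0 B (-Bᴴ) 0) ?_
    · have hmul : (Matrix.fromCols (1 : Matrix (Fin nbar) (Fin nbar) ℂ) (0 : Matrix (Fin nbar) (Fin k) ℂ) : Matrix (Fin nbar) (Fin nbar ⊕ Fin k) ℂ) *
          Matrix.fromBlocks 0 B (-Bᴴ) 0 * Matrix.fromRows ξ₁ ξ₂ = B * ξ₂ := by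
        rw [fromCols_mul_fromBlocks, fromCols_mul_fromRows]
        simp
      rwa [hmul] at h
    · rw [Matrix.fromBlocks_conjTranspose]
      rw [show -Matrix.fromBlocks 0 B (-Bᴴ) (0:Matrix (Fin k) (Fin k) ℂ) = Matrix.fromBlocks (-0) (-B) (-(-Bᴴ)) (-0) from Matrix.fromBlocks_neg ..]
      simp
  have key' : ∀ B : Matrix (Fin nbar) (Fin k) ℂ,
      Matrix.trace (B * ξ₂) = 0 := by
    intro B
    have h1 := key B
    have h2 := key (Complex.I • B)
    rw [Matrix.smul_mul, Matrix.trace_smul] at h2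
    rw [show Complex.I • (B * ξ₂).trace = Complex.I * (B * ξ₂).trace from rfl, Complex.mul_re, Complex.I_re, Complex.I_im] at h2
    apply Complex.ext <;> simp <;> linarith
  ext i j
  have := key' (Matrix.single j i 1)
  rw [Matrix.trace_mul_comm] at this
  rw [show (0:Matrix (Fin k) (Fin nbar) ℂ) i j = 0 from rfl]
  rw [← this]
  simp [Matrix.trace, Matrix.mul_apply, Matrix.single, Matrix.diag, ite_and, Finset.sum_ite_eq]
end

section
/- Let ξ be an n×n̄ complex matrix such that Re(trace(Π σ ξ)) = 0 for all σ ∈ u(n), and suppose the top n̄×n̄ block ξ₁ is diagonalizable as ξ₁ = V† D V with V ∈ U(n̄) and D diagonal. Then D is a real matrix. -/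
open Matrix

/-- If `Re(trace(Π σ ξ)) = 0` for all anti-Hermitian `σ`, and the top block
`ξ₁` of `ξ` is diagonalizable as `ξ₁ = Vᴴ D V` with `V` unitary and `D` diagonal,
then `D` is a real matrix. -/
theorem critical_point_diag_real (nbar k : ℕ)
    (ξ₁ : Matrix (Fin nbar) (Fin nbar) ℂ)
    (ξ₂ : Matrix (Fin k) (Fin nbar) ℂ)
    (ξ : Matrix (Fin nbar ⊕ Fin k) (Fin nbar) ℂ)
    (hξ : ξ = Matrix.fromRows ξ₁ ξ₂)
    (P : Matrix (Fin nbar) (Fin nbar ⊕ Fin k) ℂ)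
    (hP : P = Matrix.fromCols 1 0)
    (hcrit : ∀ σ : Matrix (Fin nbar ⊕ Fin k) (Fin nbar ⊕ Fin k) ℂ,
      σᴴ = -σ → (Matrix.trace (P * σ * ξ)).re = 0)
    (V : Matrix (Fin nbar) (Fin nbar) ℂ) (hV : V ∈ Matrix.unitaryGroup (Fin nbar) ℂ)
    (D : Fin nbar → ℂ) (hdiag : ξ₁ = Vᴴ * Matrix.diagonal D * V) :
    ∀ i, (D i).im = 0 := by
  intro i
  have hVV : V * Vᴴ = 1 := (Matrix.mem_unitaryGroup_iff).mp hV
  set E : Matrix (Fin nbar) (Fin nbar) ℂ := Matrix.diagonal (Pi.single i 1) with hE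
  have hstar : star (Pi.single i 1 : Fin nbar → ℂ) = Pi.single i 1 := by
    funext j
    simp [Pi.single_apply, apply_ite]
  have hEH : Eᴴ = E := by
    rw [hE, Matrix.diagonal_conjTranspose, hstar]
  set A : Matrix (Fin nbar) (Fin nbar) ℂ := Complex.I • (Vᴴ * E * V) with hA
  set σ : Matrix (Fin nbar ⊕ Fin k) (Fin nbar ⊕ Fin k) ℂ := Matrix.fromBlocks A 0 0 0 with hσ
  have hAH : Aᴴ = -A := by
    rw [hA]
    simp only [Matrix.conjTranspose_smul, Matrix.conjTranspose_mul,
      Matrix.conjTranspose_conjTranspose, hEH, Complex.star_def, Complex.conj_I, neg_smul,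
      Matrix.mul_assoc]
  have hanti : σᴴ = -σ := by
    simp [hσ, Matrix.fromBlocks_conjTranspose, hAH, Matrix.fromBlocks_neg]
  have h := hcrit σ hanti
  have hPσξ : P * σ * ξ = A * ξ₁ := by
    rw [hP, hξ, hσ, Matrix.fromCols_mul_fromBlocks, Matrix.fromCols_mul_fromRows]
    simp
  rw [hPσξ] at h
  have hkey : Vᴴ * E * V * (Vᴴ * Matrix.diagonal D * V) = Vᴴ * (E * Matrix.diagonal D) * V := by
    simp only [Matrix.mul_assoc]
    rw [← Matrix.mul_assoc V Vᴴ, hVV, Matrix.one_mul]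
  have htr : Matrix.trace (A * ξ₁) = Complex.I * D i := by
    rw [hA, hdiag, Matrix.smul_mul, Matrix.trace_smul, hkey, smul_eq_mul]
    rw [Matrix.trace_mul_comm, ← Matrix.mul_assoc, hVV, Matrix.one_mul]
    rw [hE, Matrix.diagonal_mul_diagonal, Matrix.trace_diagonal]
    simp [Pi.single_apply]
  rw [htr] at h
  simpa [Complex.mul_re] using h
end

section
/- Let A be a block-diagonal square complex matrix A = diag(A₁, I_k), where A₁ is m×m and I_k is the k×k identity. If H₁ is a unitary m×m matrix minimizing ‖H₁ − A₁‖ over U(m), then H = diag(H₁, I_k) minimizes ‖H − A‖ over all unitary (m+k)×(m+k) matrices, where ‖·‖ is the Frobenius norm. -/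
open Matrix

/-- Frobenius norm of a complex matrix: ‖A‖ = sqrt(Re trace(Aᴴ A)). -/
noncomputable def frobNorm {m n : Type*} [Fintype m] [Fintype n]
    (A : Matrix m n ℂ) : ℝ :=
  Real.sqrt (Matrix.trace (Aᴴ * A)).re

namespace ClosestUnitaryAux

set_option linter.unusedSectionVars false
open scoped ComplexOrder
open scoped MatrixOrder

variable {n : Type*} [Fintype n] [DecidableEq n]

/-- Quadratic-form contraction property. -/
def Contr {n : Type*} [Fintype n] (M : Matrix n n ℂ) : Prop :=
  ∀ v : n → ℂ, (star (M *ᵥ v) ⬝ᵥ (M *ᵥ v)).re ≤ (star v ⬝ᵥ v).re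

lemma re_star_dot (u : n → ℂ) : (star u ⬝ᵥ u).re = ∑ i, Complex.normSq (u i) := by
  rw [dotProduct, Complex.re_sum]
  refine Finset.sum_congr rfl fun i _ => ?_
  rw [Pi.star_apply, mul_comm]
  simp [Complex.mul_conj]

/-- Cauchy–Schwarz for the complex dot product. -/
lemma norm_star_dot_le (x y : n → ℂ) :
    ‖star x ⬝ᵥ y‖ ≤ Real.sqrt (star x ⬝ᵥ x).re * Real.sqrt (star y ⬝ᵥ y).re := by
  set x' : EuclideanSpace ℂ n := (WithLp.equiv 2 (n → ℂ)).symm x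
  set y' : EuclideanSpace ℂ n := (WithLp.equiv 2 (n → ℂ)).symm y
  have h1 : inner ℂ x' y' = star x ⬝ᵥ y := dotProduct_comm y (star x)
  have h2 : inner ℂ x' x' = star x ⬝ᵥ x := dotProduct_comm x (star x)
  have h3 : inner ℂ y' y' = star y ⬝ᵥ y := dotProduct_comm y (star y)
  have hx : ‖x'‖ = Real.sqrt (star x ⬝ᵥ x).re := by
    rw [← h2, ← RCLike.re_to_complex, inner_self_eq_norm_sq, Real.sqrt_sq (norm_nonneg _)]
  have hy : ‖y'‖ = Real.sqrt (star y ⬝ᵥ y).re := by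
    rw [← h3, ← RCLike.re_to_complex, inner_self_eq_norm_sq, Real.sqrt_sq (norm_nonneg _)]
  calc ‖star x ⬝ᵥ y‖ = ‖(inner ℂ x' y' : ℂ)‖ := by rw [h1]
    _ ≤ ‖x'‖ * ‖y'‖ := norm_inner_le_norm x' y'
    _ = _ := by rw [hx, hy]

/-- Unitary matrices preserve the quadratic form. -/
lemma unitary_dot {W : Matrix n n ℂ} (hW : W ∈ Matrix.unitaryGroup n ℂ) (v : n → ℂ) :
    star (W *ᵥ v) ⬝ᵥ (W *ᵥ v) = star v ⬝ᵥ v := by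
  have h1 : Wᴴ * W = 1 := by
    rw [← star_eq_conjTranspose]; exact mem_unitaryGroup_iff'.mp hW
  rw [star_mulVec, ← dotProduct_mulVec, mulVec_mulVec, h1, one_mulVec]

lemma contr_of_unitary {W : Matrix n n ℂ} (hW : W ∈ Matrix.unitaryGroup n ℂ) : Contr W :=
  fun v => le_of_eq (congrArg Complex.re (unitary_dot hW v))

lemma contr_conjTranspose_unitary_mul {W M : Matrix n n ℂ}
    (hW : W ∈ Matrix.unitaryGroup n ℂ) (hM : Contr M) : Contr (Wᴴ * M) := by
  intro v
  have hWs : Wᴴ ∈ Matrix.unitaryGroup n ℂ := by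
    rw [← star_eq_conjTranspose]; exact Unitary.star_mem hW
  rw [← mulVec_mulVec, unitary_dot hWs]
  exact hM v

lemma norm_diag_le_one {M : Matrix n n ℂ} (hM : Contr M) (i : n) :
    ‖M i i‖ ≤ 1 := by
  have e : star (Pi.single i (1:ℂ) : n → ℂ) = (Pi.single i (1:ℂ) : n → ℂ) := by
    funext j; rcases eq_or_ne j i with h | h <;> simp [h, Pi.single_apply]
  have hdot : ∀ w : n → ℂ, star (Pi.single i (1:ℂ)) ⬝ᵥ w = w i := by
    intro w; rw [e, single_dotProduct, one_mul]
  have hMi : (M *ᵥ Pi.single i (1:ℂ)) i = M i i := by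
    simp [mulVec_single]
  have hee : (star (Pi.single i (1:ℂ)) ⬝ᵥ Pi.single i (1:ℂ)).re = 1 := by
    rw [hdot]; simp
  have h := norm_star_dot_le (Pi.single i (1:ℂ)) (M *ᵥ Pi.single i 1)
  rw [hdot, hMi, hee, Real.sqrt_one, one_mul] at h
  refine h.trans ?_
  have h2 : (star (M *ᵥ Pi.single i (1:ℂ)) ⬝ᵥ (M *ᵥ Pi.single i 1)).re ≤ 1 :=
    (hM _).trans (le_of_eq hee)
  calc Real.sqrt _ ≤ Real.sqrt 1 := Real.sqrt_le_sqrt h2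
    _ = 1 := Real.sqrt_one

lemma abs_re_trace_le {M : Matrix n n ℂ} (hM : Contr M) :
    |(Matrix.trace M).re| ≤ (Fintype.card n : ℝ) := by
  rw [Matrix.trace, Complex.re_sum]
  calc |∑ i, (Matrix.diag M i).re| ≤ ∑ i, |(Matrix.diag M i).re| :=
        Finset.abs_sum_le_sum_abs _ _
    _ ≤ ∑ _i : n, (1:ℝ) := Finset.sum_le_sum fun i _ =>
        (Complex.abs_re_le_norm _).trans (norm_diag_le_one hM i)
    _ = Fintype.card n := by simp

/-- Key trace estimate: `Re tr(P M) ≤ tr P` for `P` psd and `M` a contraction. -/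
lemma re_trace_psd_mul_le {P M : Matrix n n ℂ} (hP : P.PosSemidef) (hM : Contr M) :
    (Matrix.trace (P * M)).re ≤ (Matrix.trace P).re := by
  have hH : P.IsHermitian := hP.isHermitian
  set Q : Matrix n n ℂ := (hH.eigenvectorUnitary : Matrix n n ℂ) with hQdef
  have hQ : star Q * Q = 1 := mem_unitaryGroup_iff'.mp hH.eigenvectorUnitary.2
  set d : n → ℝ := hH.eigenvalues with hddef
  have hd : ∀ i, 0 ≤ d i := hP.eigenvalues_nonneg
  set D : Matrix n n ℂ := diagonal (fun i => (d i : ℂ)) with hDdef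
  have hspec : P = Q * D * star Q := by
    have := hH.spectral_theorem
    rw [Unitary.conjStarAlgAut_apply] at this
    exact this
  set N : Matrix n n ℂ := star Q * M * Q with hNdef
  have hNdiag : ∀ i, ‖N i i‖ ≤ 1 := by
    intro i
    set q : n → ℂ := fun a => Q a i with hqdef
    have hq1 : star q ⬝ᵥ q = 1 := by
      have : (star Q * Q) i i = star q ⬝ᵥ q := by
        simp [mul_apply, dotProduct, hqdef, star_apply]
      rw [hQ] at this
      simpa using this.symm
    have hNii : N i i = star q ⬝ᵥ (M *ᵥ q) := by
      simp [hNdef, mul_apply, dotProduct, mulVec, hqdef, star_apply, Finset.mul_sum,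
        Finset.sum_mul, mul_assoc]
    have h := norm_star_dot_le q (M *ᵥ q)
    rw [← hNii, hq1] at h
    simp only [Complex.one_re, Real.sqrt_one, one_mul] at h
    refine h.trans ?_
    have h2 : (star (M *ᵥ q) ⬝ᵥ (M *ᵥ q)).re ≤ 1 := by
      have := hM q
      rw [hq1] at this
      simpa using this
    calc Real.sqrt _ ≤ Real.sqrt 1 := Real.sqrt_le_sqrt h2
      _ = 1 := Real.sqrt_one
  have htr : Matrix.trace (P * M) = ∑ i, (d i : ℂ) * N i i := by
    have e1 : P * M = (Q * D) * (star Q * M) := by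
      rw [hspec, Matrix.mul_assoc]
    rw [e1, Matrix.trace_mul_comm, ← Matrix.mul_assoc, ← hNdef,
      Matrix.trace_mul_comm]
    simp [Matrix.trace, Matrix.diag, Matrix.mul_apply, hDdef, Matrix.diagonal_apply]
  have htrP : (Matrix.trace P).re = ∑ i, d i := by
    have e1 : P = (Q * D) * star Q := hspec
    rw [e1, Matrix.trace_mul_comm, ← Matrix.mul_assoc, hQ, Matrix.one_mul]
    rw [hDdef, Matrix.trace_diagonal, Complex.re_sum]
    simp
  rw [htr, Complex.re_sum, htrP]
  refine Finset.sum_le_sum fun i _ => ?_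
  rw [Complex.re_ofReal_mul]
  calc d i * (N i i).re ≤ d i * 1 := by
        refine mul_le_mul_of_nonneg_left ?_ (hd i)
        exact (Complex.re_le_norm _).trans (hNdiag i)
    _ = d i := mul_one _

/-- For an invertible matrix `A`, via polar decomposition there is a unitary `U`
maximizing `Re tr(Aᴴ U)` among contractions. -/
lemma trace_le_of_isUnit {A M : Matrix n n ℂ} (hA : IsUnit A) (hM : Contr M) :
    ∃ U ∈ Matrix.unitaryGroup n ℂ,
      (Matrix.trace (Aᴴ * M)).re ≤ (Matrix.trace (Aᴴ * U)).re := by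
  have hpsd : (Aᴴ * A).PosSemidef := posSemidef_conjTranspose_mul_self A
  set P : Matrix n n ℂ := CFC.sqrt (Aᴴ * A) with hPdef
  have hP : P.PosSemidef := (CFC.sqrt_nonneg _).posSemidef
  have hPP : P * P = Aᴴ * A := CFC.sqrt_mul_sqrt_self _ hpsd.nonneg
  have hAH : IsUnit (Aᴴ) := by
    rw [← star_eq_conjTranspose]; exact hA.star
  have hAA : IsUnit (Aᴴ * A) := hAH.mul hA
  have hPdet : IsUnit P.det := by
    have h1 : IsUnit (P.det * P.det) := by
      rw [← Matrix.det_mul, hPP]; exact (Matrix.isUnit_iff_isUnit_det _).mp hAA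
    rcases isUnit_iff_ne_zero.mp h1 with h
    exact isUnit_iff_ne_zero.mpr fun h0 => h (by rw [h0, zero_mul])
  have hPH : Pᴴ = P := hP.isHermitian
  have hPinv : (P⁻¹)ᴴ = P⁻¹ := by rw [Matrix.conjTranspose_nonsing_inv, hPH]
  set U : Matrix n n ℂ := A * P⁻¹ with hUdef
  have hU : U ∈ Matrix.unitaryGroup n ℂ := by
    rw [mem_unitaryGroup_iff', star_eq_conjTranspose]
    have : Uᴴ = P⁻¹ * Aᴴ := by rw [hUdef, conjTranspose_mul, hPinv]
    rw [this, hUdef, Matrix.mul_assoc, ← Matrix.mul_assoc Aᴴ A P⁻¹, ← hPP]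
    rw [Matrix.mul_assoc P P P⁻¹, Matrix.mul_nonsing_inv _ hPdet, Matrix.mul_one,
      Matrix.nonsing_inv_mul _ hPdet]
  have hAU : A = U * P := by
    rw [hUdef, Matrix.mul_assoc, Matrix.nonsing_inv_mul _ hPdet, Matrix.mul_one]
  have hAHU : Aᴴ * U = P := by
    rw [hAU, conjTranspose_mul, hPH, Matrix.mul_assoc]
    rw [show Uᴴ * U = 1 by rw [← star_eq_conjTranspose]; exact mem_unitaryGroup_iff'.mp hU,
      Matrix.mul_one]
  refine ⟨U, hU, ?_⟩
  have hAM : Aᴴ * M = P * (Uᴴ * M) := by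
    rw [hAU, conjTranspose_mul, hPH, Matrix.mul_assoc]
  rw [hAM, hAHU]
  exact re_trace_psd_mul_le hP (contr_conjTranspose_unitary_mul hU hM)

/-- The main inequality: for any contraction `M`,
`Re tr(Aᴴ M) ≤ Re tr(Aᴴ H₁)` whenever `H₁` maximizes over unitaries. -/
lemma key_ineq {A M H₁ : Matrix n n ℂ} (hM : Contr M)
    (hmax : ∀ U ∈ Matrix.unitaryGroup n ℂ,
      (Matrix.trace (Aᴴ * U)).re ≤ (Matrix.trace (Aᴴ * H₁)).re) :
    (Matrix.trace (Aᴴ * M)).re ≤ (Matrix.trace (Aᴴ * H₁)).re := by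
  refine le_of_forall_pos_le_add fun ε hε => ?_
  set c : ℝ := ε / (2 * (Fintype.card n : ℝ) + 1) with hcdef
  have hc : 0 < c := div_pos hε (by positivity)
  have hfin : {x : ℝ | (-(x:ℂ)) ∈ spectrum ℂ A}.Finite := by
    have := Matrix.finite_spectrum (R := ℂ) A
    refine Set.Finite.preimage ?_ this
    intro a _ b _ h
    simpa using h
  obtain ⟨δ, hδmem⟩ := ((Set.Ioo_infinite hc).diff hfin).nonempty
  obtain ⟨⟨hδ0, hδc⟩, hδspec⟩ := hδmem
  have hA' : IsUnit (A + (δ:ℂ) • 1) := by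
    have h1 : IsUnit (algebraMap ℂ (Matrix n n ℂ) (-(δ:ℂ)) - A) :=
      spectrum.notMem_iff.mp hδspec
    have h2 : algebraMap ℂ (Matrix n n ℂ) (-(δ:ℂ)) - A = -(A + (δ:ℂ) • 1) := by
      rw [Algebra.algebraMap_eq_smul_one, neg_smul]
      abel
    rw [h2] at h1
    exact (IsUnit.neg_iff _).mp h1
  set A' : Matrix n n ℂ := A + (δ:ℂ) • 1 with hA'def
  obtain ⟨U, hU, hle⟩ := trace_le_of_isUnit hA' hM
  have hA'H : A'ᴴ = Aᴴ + (δ:ℂ) • 1 := by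
    rw [hA'def, conjTranspose_add, conjTranspose_smul, conjTranspose_one,
      Complex.star_def, Complex.conj_ofReal]
  have hexp : ∀ X : Matrix n n ℂ,
      (Matrix.trace (A'ᴴ * X)).re = (Matrix.trace (Aᴴ * X)).re + δ * (Matrix.trace X).re := by
    intro X
    rw [hA'H, Matrix.add_mul, Matrix.smul_mul, Matrix.one_mul, Matrix.trace_add,
      Matrix.trace_smul, Complex.add_re, smul_eq_mul, Complex.re_ofReal_mul]
  have hMle := abs_re_trace_le hM
  have hUle := abs_re_trace_le (contr_of_unitary hU)
  have h1 : (Matrix.trace (Aᴴ * M)).re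
      = (Matrix.trace (A'ᴴ * M)).re - δ * (Matrix.trace M).re := by
    rw [hexp M]; ring
  have h2 := hexp U
  have hmaxU := hmax U hU
  have hcard : (0:ℝ) ≤ (Fintype.card n : ℝ) := Nat.cast_nonneg _
  have habs1 : -((Fintype.card n : ℝ)) ≤ (Matrix.trace M).re := neg_le_of_abs_le hMle
  have habs2 : (Matrix.trace U).re ≤ (Fintype.card n : ℝ) := le_of_abs_le hUle
  have hδε : δ * (2 * (Fintype.card n : ℝ)) ≤ ε := by
    have : δ * (2 * (Fintype.card n : ℝ) + 1) ≤ c * (2 * (Fintype.card n : ℝ) + 1) := by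
      apply mul_le_mul_of_nonneg_right hδc.le (by positivity)
    rw [hcdef, div_mul_cancel₀ _ (by positivity : (2 * (Fintype.card n : ℝ) + 1) ≠ 0)] at this
    nlinarith
  nlinarith [mul_le_mul_of_nonneg_left habs2 hδ0.le,
    mul_le_mul_of_nonneg_left habs1 hδ0.le]

lemma re_trace_sq_nonneg (X : Matrix n n ℂ) : 0 ≤ (Matrix.trace (Xᴴ * X)).re := by
  have h : Matrix.trace (Xᴴ * X) = ∑ i, ∑ j, (starRingEnd ℂ) (X j i) * X j i := by
    simp [Matrix.trace, Matrix.diag, Matrix.mul_apply, Matrix.conjTranspose_apply]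
  rw [h, Complex.re_sum]
  refine Finset.sum_nonneg fun i _ => ?_
  rw [Complex.re_sum]
  refine Finset.sum_nonneg fun j _ => ?_
  rw [mul_comm, Complex.mul_conj]
  exact_mod_cast Complex.normSq_nonneg _

lemma dist_sq_expand {K : Matrix n n ℂ} (A : Matrix n n ℂ)
    (hK : K ∈ Matrix.unitaryGroup n ℂ) :
    (Matrix.trace ((K - A)ᴴ * (K - A))).re
      = (Fintype.card n : ℝ) - 2 * (Matrix.trace (Aᴴ * K)).re
        + (Matrix.trace (Aᴴ * A)).re := by
  have h1 : Kᴴ * K = 1 := by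
    rw [← star_eq_conjTranspose]; exact mem_unitaryGroup_iff'.mp hK
  have h2 : Matrix.trace (Kᴴ * A) = star (Matrix.trace (Aᴴ * K)) := by
    rw [← Matrix.trace_conjTranspose, conjTranspose_mul, conjTranspose_conjTranspose]
  have hexp : (K - A)ᴴ * (K - A) = Kᴴ * K - Kᴴ * A - Aᴴ * K + Aᴴ * A := by
    rw [conjTranspose_sub]; noncomm_ring
  rw [hexp, Matrix.trace_add, Matrix.trace_sub, Matrix.trace_sub, h1, h2,
    Matrix.trace_one]
  simp only [Complex.add_re, Complex.sub_re, Complex.natCast_re]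
  rw [show (star (Matrix.trace (Aᴴ * K))).re = (Matrix.trace (Aᴴ * K)).re from
    Complex.conj_re _]
  ring

lemma frob_le_frob {K H : Matrix n n ℂ} (A : Matrix n n ℂ)
    (hK : K ∈ Matrix.unitaryGroup n ℂ) (hH : H ∈ Matrix.unitaryGroup n ℂ)
    (h : (Matrix.trace (Aᴴ * K)).re ≤ (Matrix.trace (Aᴴ * H)).re) :
    frobNorm (H - A) ≤ frobNorm (K - A) := by
  unfold frobNorm
  apply Real.sqrt_le_sqrt
  rw [dist_sq_expand A hH, dist_sq_expand A hK]
  linarith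

lemma trace_le_of_frob {U H : Matrix n n ℂ} (A : Matrix n n ℂ)
    (hU : U ∈ Matrix.unitaryGroup n ℂ) (hH : H ∈ Matrix.unitaryGroup n ℂ)
    (h : frobNorm (H - A) ≤ frobNorm (U - A)) :
    (Matrix.trace (Aᴴ * U)).re ≤ (Matrix.trace (Aᴴ * H)).re := by
  unfold frobNorm at h
  have h2 := (Real.sqrt_le_sqrt_iff (re_trace_sq_nonneg _)).mp h
  rw [dist_sq_expand A hH, dist_sq_expand A hU] at h2
  linarith

lemma trace_fromBlocks {p q : Type*} [Fintype p] [Fintype q]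
    (A : Matrix p p ℂ) (B : Matrix p q ℂ) (C : Matrix q p ℂ) (D : Matrix q q ℂ) :
    Matrix.trace (fromBlocks A B C D) = Matrix.trace A + Matrix.trace D := by
  simp [Matrix.trace, Matrix.diag, Fintype.sum_sum_type, fromBlocks]

lemma contr_toBlocks₁₁ {p q : Type*} [Fintype p] [Fintype q] [DecidableEq p] [DecidableEq q]
    {K : Matrix (p ⊕ q) (p ⊕ q) ℂ} (hK : K ∈ Matrix.unitaryGroup (p ⊕ q) ℂ) :
    Contr (K.toBlocks₁₁) := by
  intro v
  set w : p ⊕ q → ℂ := Sum.elim v 0 with hwdef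
  have hmv : ∀ i, (K *ᵥ w) (Sum.inl i) = (K.toBlocks₁₁ *ᵥ v) i := by
    intro i
    simp [mulVec, dotProduct, Fintype.sum_sum_type, toBlocks₁₁, hwdef]
  have h1 : (star (K *ᵥ w) ⬝ᵥ (K *ᵥ w)).re = (star w ⬝ᵥ w).re :=
    congrArg Complex.re (unitary_dot hK w)
  have h2 : (star w ⬝ᵥ w).re = (star v ⬝ᵥ v).re := by
    rw [re_star_dot, re_star_dot, Fintype.sum_sum_type]
    simp [hwdef]
  calc (star (K.toBlocks₁₁ *ᵥ v) ⬝ᵥ (K.toBlocks₁₁ *ᵥ v)).re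
      = ∑ i, Complex.normSq ((K.toBlocks₁₁ *ᵥ v) i) := re_star_dot _
    _ = ∑ i, Complex.normSq ((K *ᵥ w) (Sum.inl i)) := by simp [hmv]
    _ ≤ (star (K *ᵥ w) ⬝ᵥ (K *ᵥ w)).re := by
        rw [re_star_dot, Fintype.sum_sum_type]
        exact le_add_of_nonneg_right (Finset.sum_nonneg fun j _ => Complex.normSq_nonneg _)
    _ = (star v ⬝ᵥ v).re := h1.trans h2

lemma contr_toBlocks₂₂ {p q : Type*} [Fintype p] [Fintype q] [DecidableEq p] [DecidableEq q]
    {K : Matrix (p ⊕ q) (p ⊕ q) ℂ} (hK : K ∈ Matrix.unitaryGroup (p ⊕ q) ℂ) :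
    Contr (K.toBlocks₂₂) := by
  intro v
  set w : p ⊕ q → ℂ := Sum.elim 0 v with hwdef
  have hmv : ∀ i, (K *ᵥ w) (Sum.inr i) = (K.toBlocks₂₂ *ᵥ v) i := by
    intro i
    simp [mulVec, dotProduct, Fintype.sum_sum_type, toBlocks₂₂, hwdef]
  have h1 : (star (K *ᵥ w) ⬝ᵥ (K *ᵥ w)).re = (star w ⬝ᵥ w).re :=
    congrArg Complex.re (unitary_dot hK w)
  have h2 : (star w ⬝ᵥ w).re = (star v ⬝ᵥ v).re := by
    rw [re_star_dot, re_star_dot, Fintype.sum_sum_type]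
    simp [hwdef]
  calc (star (K.toBlocks₂₂ *ᵥ v) ⬝ᵥ (K.toBlocks₂₂ *ᵥ v)).re
      = ∑ i, Complex.normSq ((K.toBlocks₂₂ *ᵥ v) i) := re_star_dot _
    _ = ∑ i, Complex.normSq ((K *ᵥ w) (Sum.inr i)) := by simp [hmv]
    _ ≤ (star (K *ᵥ w) ⬝ᵥ (K *ᵥ w)).re := by
        rw [re_star_dot, Fintype.sum_sum_type]
        exact le_add_of_nonneg_left (Finset.sum_nonneg fun j _ => Complex.normSq_nonneg _)
    _ = (star v ⬝ᵥ v).re := h1.trans h2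

end ClosestUnitaryAux

/-- For `A = diag(A₁, I_k)`: if `H₁` is a closest unitary matrix to `A₁`, then
`H = diag(H₁, I_k)` is a closest unitary matrix to `A`. -/
theorem closest_unitary_block_diag (m k : ℕ)
    (A₁ : Matrix (Fin m) (Fin m) ℂ)
    (A : Matrix (Fin m ⊕ Fin k) (Fin m ⊕ Fin k) ℂ)
    (hA : A = Matrix.fromBlocks A₁ 0 0 (1 : Matrix (Fin k) (Fin k) ℂ))
    (H₁ : Matrix (Fin m) (Fin m) ℂ)
    (hH₁ : H₁ ∈ Matrix.unitaryGroup (Fin m) ℂ)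
    (hmin₁ : ∀ K ∈ Matrix.unitaryGroup (Fin m) ℂ,
      frobNorm (H₁ - A₁) ≤ frobNorm (K - A₁))
    (H : Matrix (Fin m ⊕ Fin k) (Fin m ⊕ Fin k) ℂ)
    (hH : H = Matrix.fromBlocks H₁ 0 0 (1 : Matrix (Fin k) (Fin k) ℂ)) :
    H ∈ Matrix.unitaryGroup (Fin m ⊕ Fin k) ℂ ∧
      ∀ K ∈ Matrix.unitaryGroup (Fin m ⊕ Fin k) ℂ,
        frobNorm (H - A) ≤ frobNorm (K - A) := by
  have hH1 : H₁ᴴ * H₁ = 1 := by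
    rw [← star_eq_conjTranspose]; exact Matrix.mem_unitaryGroup_iff'.mp hH₁
  have hHu : H ∈ Matrix.unitaryGroup (Fin m ⊕ Fin k) ℂ := by
    rw [hH, Matrix.mem_unitaryGroup_iff', star_eq_conjTranspose,
      Matrix.fromBlocks_conjTranspose, Matrix.fromBlocks_multiply]
    simp [hH1, Matrix.fromBlocks_one]
  refine ⟨hHu, fun K hK => ?_⟩
  apply ClosestUnitaryAux.frob_le_frob A hK hHu
  have hmax : ∀ U ∈ Matrix.unitaryGroup (Fin m) ℂ,
      (Matrix.trace (A₁ᴴ * U)).re ≤ (Matrix.trace (A₁ᴴ * H₁)).re :=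
    fun U hU => ClosestUnitaryAux.trace_le_of_frob A₁ hU hH₁ (hmin₁ U hU)
  have hKdec : Matrix.trace (Aᴴ * K)
      = Matrix.trace (A₁ᴴ * K.toBlocks₁₁) + Matrix.trace (K.toBlocks₂₂) := by
    conv_lhs => rw [hA, ← Matrix.fromBlocks_toBlocks K]
    rw [Matrix.fromBlocks_conjTranspose, Matrix.fromBlocks_multiply,
      ClosestUnitaryAux.trace_fromBlocks]
    simp
  have hHdec : Matrix.trace (Aᴴ * H) = Matrix.trace (A₁ᴴ * H₁) + (k : ℂ) := by
    rw [hA, hH, Matrix.fromBlocks_conjTranspose, Matrix.fromBlocks_multiply,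
      ClosestUnitaryAux.trace_fromBlocks]
    simp
  have hi1 : (Matrix.trace (A₁ᴴ * K.toBlocks₁₁)).re ≤ (Matrix.trace (A₁ᴴ * H₁)).re :=
    ClosestUnitaryAux.key_ineq (ClosestUnitaryAux.contr_toBlocks₁₁ hK) hmax
  have hi2 : (Matrix.trace (K.toBlocks₂₂)).re ≤ (k : ℝ) := by
    have h := ClosestUnitaryAux.abs_re_trace_le (ClosestUnitaryAux.contr_toBlocks₂₂ hK)
    simpa using le_of_abs_le h
  rw [hKdec, hHdec, Complex.add_re, Complex.add_re, Complex.natCast_re]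
  linarith
end
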